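/- arXiv:1405.3527 — 5 statements merged into one kernel-verified Lean document; each statement's English description precedes it below -/
import Mathlib

section
/- Let G = (V,E) be a finite simple graph and let c : V → {0,1,2} be a proper coloring of G (adjacent vertices receive different colors). Then the orientation of G that directs each edge {u,v} from u to v if and only if c(u) < c(v) is a semi-transitive orientation of G. -/
/-- A digraph (given as a relation `D`) is semi-transitive if it is acyclic and for
every directed path `v 0 → v 1 → ⋯ → v k` with at least 4 distinct vertices,
if `v 0 → v k` is an edge then `v i → v j` is an edge for all `i < j`. -/
def SemiTransitive {V : Type*} (D : V → V → Prop) : Prop :=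
  (∀ v : V, ¬ Relation.TransGen D v v) ∧
  ∀ k : ℕ, 3 ≤ k → ∀ v : Fin (k + 1) → V, Function.Injective v →
    (∀ i : Fin k, D (v i.castSucc) (v i.succ)) →
    D (v 0) (v (Fin.last k)) →
    ∀ i j : Fin (k + 1), i < j → D (v i) (v j)

/-- `D` is an orientation of the simple graph `G`: every edge of `G` gets exactly one
direction, and `D` only relates adjacent vertices. -/
def IsOrientation {V : Type*} (G : SimpleGraph V) (D : V → V → Prop) : Prop :=
  ∀ x y : V, (G.Adj x y ↔ (D x y ∨ D y x)) ∧ ¬ (D x y ∧ D y x)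

/-- For a proper 3-coloring `c` of `G`, directing each edge from the endpoint of
smaller color to the endpoint of larger color yields a semi-transitive orientation. -/
theorem coloring_orientation_semiTransitive
    {V : Type*} [Fintype V] (G : SimpleGraph V) (c : V → Fin 3)
    (hc : ∀ u v : V, G.Adj u v → c u ≠ c v) :
    IsOrientation G (fun u v => G.Adj u v ∧ c u < c v) ∧
      SemiTransitive (fun u v => G.Adj u v ∧ c u < c v) := by
  constructor
  · intro x y
    constructor
    · constructor
      · intro h
        rcases lt_or_gt_of_ne (hc x y h) with h' | h'
        · exact Or.inl ⟨h, h'⟩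
        · exact Or.inr ⟨h.symm, h'⟩
      · rintro (⟨h, _⟩ | ⟨h, _⟩)
        · exact h
        · exact h.symm
    · rintro ⟨⟨_, h1⟩, ⟨_, h2⟩⟩
      exact absurd h1 (not_lt.2 h2.le)
  · constructor
    · intro x h
      have : ∀ a b : V, Relation.TransGen (fun u v => G.Adj u v ∧ c u < c v) a b → c a < c b := by
        intro a b hab
        induction hab with
        | single h => exact h.2
        | tail _ h ih => exact ih.trans h.2
      exact lt_irrefl _ (this x x h)
    · intro k hk v _ hpath _ i j _
      exfalso
      have h0 : (0 : ℕ) < k := by omega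
      have h1 : (1 : ℕ) < k := by omega
      have h2 : (2 : ℕ) < k := by omega
      have e0 := hpath ⟨0, h0⟩
      have e1 := hpath ⟨1, h1⟩
      have e2 := hpath ⟨2, h2⟩
      have hc0 : c (v (⟨0, h0⟩ : Fin k).castSucc) < c (v (⟨0, h0⟩ : Fin k).succ) := e0.2
      have hc1 : c (v (⟨1, h1⟩ : Fin k).castSucc) < c (v (⟨1, h1⟩ : Fin k).succ) := e1.2
      have hc2 : c (v (⟨2, h2⟩ : Fin k).castSucc) < c (v (⟨2, h2⟩ : Fin k).succ) := e2.2
      have heq1 : (⟨0, h0⟩ : Fin k).succ = (⟨1, h1⟩ : Fin k).castSucc := by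
        ext; simp
      have heq2 : (⟨1, h1⟩ : Fin k).succ = (⟨2, h2⟩ : Fin k).castSucc := by
        ext; simp
      rw [heq1] at hc0
      rw [heq2] at hc1
      have := (hc0.trans hc1).trans hc2
      have hA := (c (v (⟨0, h0⟩ : Fin k).castSucc)).isLt
      have hB := (c (v (⟨2, h2⟩ : Fin k).succ)).isLt
      have hv : (c (v (⟨0, h0⟩ : Fin k).castSucc)).val + 3 ≤
          (c (v (⟨2, h2⟩ : Fin k).succ)).val := by
        have l0 : (c (v (⟨0, h0⟩ : Fin k).castSucc)).val < (c (v (⟨1, h1⟩ : Fin k).castSucc)).val := hc0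
        have l1 : (c (v (⟨1, h1⟩ : Fin k).castSucc)).val < (c (v (⟨2, h2⟩ : Fin k).castSucc)).val := hc1
        have l2 : (c (v (⟨2, h2⟩ : Fin k).castSucc)).val < (c (v (⟨2, h2⟩ : Fin k).succ)).val := hc2
        omega
      omega
end

section
/- The graph T2 is not word-representable. -/
/-- Two letters `x` and `y` alternate in the word `w` if the subsequence of `w`
consisting of all occurrences of `x` and `y` has no two consecutive equal letters. -/
def Alternates {V : Type*} [DecidableEq V] (w : List V) (x y : V) : Prop :=
  (w.filter fun z => decide (z = x ∨ z = y)).Chain' (· ≠ ·)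

/-- A word `w` represents the graph `G`: every vertex occurs in `w`, and two distinct
letters alternate in `w` iff they are adjacent in `G`. -/
def Represents {V : Type*} [DecidableEq V] (G : SimpleGraph V) (w : List V) : Prop :=
  (∀ v : V, v ∈ w) ∧ ∀ x y : V, x ≠ y → (Alternates w x y ↔ G.Adj x y)

/-- A graph is word-representable if some word represents it. -/
def WordRepresentable {V : Type*} [DecidableEq V] (G : SimpleGraph V) : Prop :=
  ∃ w : List V, Represents G w
/-- The edges of the 3×3 grid graph on vertices `0,…,8` (labels `1,…,9`, rows
`(1,2,3), (4,5,6), (7,8,9)` from top to bottom; vertex `i : Fin 9` has label `i+1`). -/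
def gridEdges33 : Set (Sym2 (Fin 9)) :=
  {s(0, 1), s(1, 2), s(3, 4), s(4, 5), s(6, 7), s(7, 8),
   s(0, 3), s(1, 4), s(2, 5), s(3, 6), s(4, 7), s(5, 8)}

/-- The triangulation `T1`: the 3×3 grid together with the diagonals
`{2,4}, {2,6}, {5,7}, {6,8}` (in labels `1,…,9`). -/
def T1 : SimpleGraph (Fin 9) :=
  SimpleGraph.fromEdgeSet (gridEdges33 ∪ {s(1, 3), s(1, 5), s(4, 6), s(5, 7)})

/-- The triangulation `T2`: the 3×3 grid together with the diagonals
`{1,5}, {3,5}, {5,9}, {4,8}` (in labels `1,…,9`). -/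
def T2 : SimpleGraph (Fin 9) :=
  SimpleGraph.fromEdgeSet (gridEdges33 ∪ {s(0, 4), s(2, 4), s(4, 8), s(3, 7)})


section Tools
variable {V : Type*} [DecidableEq V]

/-- The filter of `w` keeping only letters `x` and `y`. -/
def fp (w : List V) (x y : V) : List V := w.filter fun z => decide (z = x ∨ z = y)

lemma alternates_iff (w : List V) (x y : V) :
    Alternates w x y ↔ (fp w x y).Chain' (· ≠ ·) := Iff.rfl

@[simp] lemma fp_nil (x y : V) : fp ([] : List V) x y = [] := rfl

lemma fp_cons_of {c x y : V} (l : List V) (h : c = x ∨ c = y) :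
    fp (c :: l) x y = c :: fp l x y := by
  simp [fp, List.filter_cons, h]

lemma fp_cons_of_not {c x y : V} (l : List V) (h1 : c ≠ x) (h2 : c ≠ y) :
    fp (c :: l) x y = fp l x y := by
  simp [fp, List.filter_cons, h1, h2]

lemma fp_append (l₁ l₂ : List V) (x y : V) :
    fp (l₁ ++ l₂) x y = fp l₁ x y ++ fp l₂ x y := List.filter_append _ _

lemma fp_comm (l : List V) (x y : V) : fp l x y = fp l y x := by
  apply List.filter_congr
  intro z _
  simp [fp, or_comm]

lemma fp_sub_mem {l : List V} {x y v : V} (h : v ∈ fp l x y) : v ∈ l :=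
  List.mem_of_mem_filter h

lemma mem_fp {l : List V} {x y v : V} (h : v ∈ fp l x y) : v = x ∨ v = y := by
  have := List.of_mem_filter h
  simpa using this

lemma count_fp_left (l : List V) {x y : V} (h : x ≠ y) :
    (fp l x y).count x = l.count x := by
  induction l with
  | nil => rfl
  | cons c t ih =>
    by_cases hc : c = x
    · subst hc
      rw [fp_cons_of t (Or.inl rfl), List.count_cons_self, List.count_cons_self, ih]
    · by_cases hcy : c = y
      · subst hcy
        rw [fp_cons_of t (Or.inr rfl), List.count_cons_of_ne h.symm, List.count_cons_of_ne h.symm]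
        exact ih
      · rw [fp_cons_of_not t hc hcy, ih, List.count_cons_of_ne hc]

lemma count_fp_right (l : List V) {x y : V} (h : x ≠ y) :
    (fp l x y).count y = l.count y := by
  rw [fp_comm]
  exact count_fp_left l h.symm

/-- If neither `x` nor `y` occurs, the pair filter is empty. -/
lemma fp_eq_nil {l : List V} {x y : V} (hx : x ∉ l) (hy : y ∉ l) : fp l x y = [] := by
  apply List.filter_eq_nil_iff.mpr
  intro c hc
  simp only [decide_eq_true_eq]
  rintro (rfl | rfl)
  exacts [hx hc, hy hc]

/-- If `x` does not occur and `y` occurs exactly once. -/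
lemma fp_eq_single {l : List V} {x y : V} (hx : x ∉ l) (hy : l.count y = 1) :
    fp l x y = [y] := by
  induction l with
  | nil => simp at hy
  | cons c t ih =>
    have hxt : x ∉ t := fun h => hx (List.mem_cons_of_mem _ h)
    by_cases hcy : c = y
    · subst hcy
      have hyt : c ∉ t := by
        rw [List.count_cons_self] at hy
        have : t.count c = 0 := by omega
        exact (List.count_eq_zero).mp this
      rw [fp_cons_of t (Or.inr rfl), fp_eq_nil hxt hyt]
    · have hcx : c ≠ x := fun h => hx (h ▸ List.mem_cons_self)
      rw [fp_cons_of_not t hcx hcy]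
      apply ih hxt
      rwa [List.count_cons_of_ne hcy] at hy

/-- Main order lemma: counts one each and `x` occurs first. -/
lemma fp_eq_pair {l : List V} {x y : V} (hxy : x ≠ y)
    (hx : l.count x = 1) (hy : l.count y = 1)
    (hlt : l.idxOf x < l.idxOf y) : fp l x y = [x, y] := by
  induction l with
  | nil => simp at hx
  | cons c t ih =>
    by_cases hcx : c = x
    · subst hcx
      have hxt : c ∉ t := by
        rw [List.count_cons_self] at hx
        exact (List.count_eq_zero).mp (by omega)
      have hyt : t.count y = 1 := by
        rwa [List.count_cons_of_ne hxy] at hy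
      rw [fp_cons_of t (Or.inl rfl), fp_eq_single hxt hyt]
    · by_cases hcy : c = y
      · subst hcy
        rw [List.idxOf_cons_self] at hlt
        omega
      · rw [fp_cons_of_not t hcx hcy]
        apply ih
        · rwa [List.count_cons_of_ne hcx] at hx
        · rwa [List.count_cons_of_ne hcy] at hy
        · rw [List.idxOf_cons_ne t hcx, List.idxOf_cons_ne t hcy] at hlt
          omega

lemma indexOf_inj {l : List V} {x y : V} (hx : x ∈ l) (hy : y ∈ l)
    (h : l.idxOf x = l.idxOf y) : x = y := by
  have hx' := List.idxOf_lt_length_iff.mpr hx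
  have hy' := List.idxOf_lt_length_iff.mpr hy
  have h1 : l[l.idxOf x]? = some x :=
    (List.getElem?_eq_getElem hx').trans (by rw [List.getElem_idxOf])
  have h2 : l[l.idxOf y]? = some y :=
    (List.getElem?_eq_getElem hy').trans (by rw [List.getElem_idxOf])
  rw [h, h2] at h1
  exact (Option.some_inj.mp h1).symm

lemma mem_of_count_one {l : List V} {x : V} (h : l.count x = 1) : x ∈ l :=
  List.count_pos_iff.mp (by omega)

/-- The two possibilities for a pair filter when both letters occur once. -/
lemma fp_pair_cases {l : List V} {x y : V} (hxy : x ≠ y)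
    (hx : l.count x = 1) (hy : l.count y = 1) :
    fp l x y = [x, y] ∨ fp l x y = [y, x] := by
  rcases lt_trichotomy (l.idxOf x) (l.idxOf y) with h | h | h
  · exact Or.inl (fp_eq_pair hxy hx hy h)
  · exact absurd (indexOf_inj (mem_of_count_one hx) (mem_of_count_one hy) h) hxy
  · right
    rw [fp_comm]
    exact fp_eq_pair hxy.symm hy hx h

/-- From the value of the filter, recover the index order. -/
lemma fp_pair_index {l : List V} {x y : V} (hxy : x ≠ y)
    (hx : l.count x = 1) (hy : l.count y = 1)
    (h : fp l x y = [x, y]) : l.idxOf x < l.idxOf y := by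
  rcases lt_trichotomy (l.idxOf x) (l.idxOf y) with h' | h' | h'
  · exact h'
  · exact absurd (indexOf_inj (mem_of_count_one hx) (mem_of_count_one hy) h') hxy
  · exfalso
    have := fp_eq_pair hxy.symm hy hx h'
    rw [fp_comm] at h
    rw [h] at this
    exact hxy (by injection this)

/-- Transitivity of the in-block order. -/
lemma fp_trans {l : List V} {x y z : V} (hxy : x ≠ y) (hyz : y ≠ z) (hxz : x ≠ z)
    (hx : l.count x = 1) (hy : l.count y = 1) (hz : l.count z = 1)
    (h1 : fp l x y = [x, y]) (h2 : fp l y z = [y, z]) : fp l x z = [x, z] := by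
  have i1 := fp_pair_index hxy hx hy h1
  have i2 := fp_pair_index hyz hy hz h2
  exact fp_eq_pair hxz hx hz (lt_trans i1 i2)

end Tools

section Glue
variable {V : Type*} [DecidableEq V]

/-- Glue blocks together with separator `a`. -/
def glue (a : V) : List (List V) → List V
  | [] => []
  | [b] => b
  | b :: b' :: bs => b ++ a :: glue a (b' :: bs)

lemma glue_cons (a : V) (b : List V) {bs : List (List V)} (h : bs ≠ []) :
    glue a (b :: bs) = b ++ a :: glue a bs := by
  cases bs with
  | nil => exact absurd rfl h
  | cons b' bs' => rfl

/-- Every word decomposes into `a`-free blocks glued by `a`. -/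
lemma glue_decomp (a : V) (w : List V) :
    ∃ B : List (List V), B ≠ [] ∧ (∀ b ∈ B, a ∉ b) ∧ glue a B = w ∧
      B.length = w.count a + 1 := by
  induction w with
  | nil => exact ⟨[[]], by simp, by simp, rfl, by simp⟩
  | cons c t ih =>
    obtain ⟨B, hne, hfree, hglue, hlen⟩ := ih
    cases B with
    | nil => exact absurd rfl hne
    | cons b bs =>
      by_cases hc : c = a
      · subst hc
        refine ⟨[] :: b :: bs, by simp, ?_, ?_, ?_⟩
        · intro b' hb'
          rcases List.mem_cons.mp hb' with rfl | h
          · simp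
          · exact hfree b' h
        · rw [glue_cons c [] (by simp), hglue]
          simp
        · simp at hlen ⊢
          omega
      · refine ⟨(c :: b) :: bs, by simp, ?_, ?_, ?_⟩
        · intro b' hb'
          rcases List.mem_cons.mp hb' with rfl | h
          · intro hmem
            rcases List.mem_cons.mp hmem with h' | h'
            · exact hc h'.symm
            · exact hfree b (List.mem_cons_self) h'
          · exact hfree b' (List.mem_cons_of_mem _ h)
        · cases bs with
          | nil =>
            simp only [glue] at hglue ⊢
            rw [hglue]
          | cons b' bs' =>
            rw [glue_cons a _ (by simp)] at hglue ⊢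
            rw [← hglue]
            simp
        · simp at hlen ⊢
          rw [List.count_cons_of_ne hc] at *
          omega

/-- Pair filter over a glued word, when neither letter is the separator. -/
lemma fp_glue {a x y : V} (hx : x ≠ a) (hy : y ≠ a) :
    ∀ (B : List (List V)), (∀ b ∈ B, a ∉ b) →
      fp (glue a B) x y = (B.map (fun b => fp b x y)).flatten
  | [], _ => by simp [glue]
  | [b], _ => by simp [glue]
  | b :: b' :: bs, hfree => by
    rw [glue_cons a b (by simp), fp_append,
      fp_cons_of_not _ (fun h => hx h.symm) (fun h => hy h.symm),
      fp_glue hx hy (b' :: bs) (fun q hq => hfree q (List.mem_cons_of_mem _ hq))]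
    simp

/-- In an `a`-free block the hub filter is a replicate. -/
lemma fp_hub_replicate {a y : V} (hy : y ≠ a) :
    ∀ {b : List V}, a ∉ b → fp b y a = List.replicate (b.count y) y
  | [], _ => by simp
  | c :: t, hfree => by
    have hca : c ≠ a := fun h => hfree (h ▸ List.mem_cons_self)
    have ht : a ∉ t := fun h => hfree (List.mem_cons_of_mem _ h)
    by_cases hcy : c = y
    · subst hcy
      rw [fp_cons_of t (Or.inl rfl), List.count_cons_self,
        fp_hub_replicate hy ht, List.replicate_succ]
    · rw [fp_cons_of_not t hcy hca, List.count_cons_of_ne hcy,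
        fp_hub_replicate hy ht]

lemma repl_le_one {c y : V} {n : ℕ} {l : List V}
    (h : List.Chain' (· ≠ ·) (c :: (List.replicate n y ++ l))) : n ≤ 1 := by
  match n with
  | 0 => omega
  | 1 => omega
  | k + 2 =>
    exfalso
    rw [List.replicate_succ, List.replicate_succ] at h
    simp only [List.Chain', List.cons_append, List.isChain_cons_cons] at h
    exact h.2.1 rfl

lemma chain_replicate_le_one {y : V} {n : ℕ}
    (h : List.Chain' (· ≠ ·) (List.replicate n y)) : n ≤ 1 := by
  match n with
  | 0 => omega
  | 1 => omega
  | k + 2 =>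
    exfalso
    rw [List.replicate_succ, List.replicate_succ] at h
    rw [List.Chain', List.isChain_cons_cons] at h
    exact h.1 rfl

lemma hub_chain_aux {a y : V} (hy : y ≠ a) :
    ∀ (M : List (List V)) (bk : List V), (∀ b ∈ M, a ∉ b) → a ∉ bk →
      List.Chain' (· ≠ ·) (a :: fp (glue a (M ++ [bk])) y a) →
      (∀ m ∈ M, m.count y = 1) ∧ bk.count y ≤ 1
  | [], bk, _, hk, hch => by
    simp only [List.nil_append] at hch
    rw [show glue a [bk] = bk from rfl, fp_hub_replicate hy hk] at hch
    rw [← List.append_nil (List.replicate (bk.count y) y)] at hch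
    exact ⟨by simp, repl_le_one hch⟩
  | m :: M', bk, hM, hk, hch => by
    have hrest : ∀ b ∈ M' ++ [bk], a ∉ b := by
      intro b hb
      rcases List.mem_append.mp hb with h | h
      · exact hM b (List.mem_cons_of_mem _ h)
      · simp at h
        subst h
        exact hk
    have hstep : glue a ((m :: M') ++ [bk]) = m ++ a :: glue a (M' ++ [bk]) := by
      rw [List.cons_append]
      exact glue_cons a m (by simp)
    rw [hstep, fp_append, fp_cons_of _ (Or.inr rfl),
      fp_hub_replicate hy (hM m (List.mem_cons_self))] at hch
    have hn1 : m.count y ≤ 1 := repl_le_one hch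
    have hn0 : m.count y ≠ 0 := by
      intro h0
      rw [h0] at hch
      simp only [List.Chain', List.replicate, List.nil_append, List.isChain_cons_cons] at hch
      exact hch.1 rfl
    have hcount : m.count y = 1 := by omega
    rw [hcount] at hch
    simp only [List.Chain', List.replicate, List.nil_append, List.cons_append, List.isChain_cons_cons] at hch
    obtain ⟨hrec, hbk⟩ := hub_chain_aux hy M' bk
      (fun b hb => hM b (List.mem_cons_of_mem _ hb)) hk hch.2.2
    refine ⟨?_, hbk⟩
    intro b hb
    rcases List.mem_cons.mp hb with rfl | h
    · exact hcount
    · exact hrec b h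

lemma hub_counts {a y : V} (hy : y ≠ a) {b₀ bk : List V} {M : List (List V)}
    (h₀ : a ∉ b₀) (hM : ∀ b ∈ M, a ∉ b) (hk : a ∉ bk)
    (hch : List.Chain' (· ≠ ·) (fp (glue a (b₀ :: (M ++ [bk]))) y a)) :
    b₀.count y ≤ 1 ∧ (∀ m ∈ M, m.count y = 1) ∧ bk.count y ≤ 1 := by
  rw [glue_cons a b₀ (by simp), fp_append, fp_cons_of _ (Or.inr rfl),
    fp_hub_replicate hy h₀] at hch
  constructor
  · exact chain_replicate_le_one (hch.prefix (List.prefix_append _ _))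
  · exact hub_chain_aux hy M bk hM hk
      (hch.infix ⟨List.replicate (b₀.count y) y, [], by simp⟩)

end Glue

section Join
variable {V : Type*} [DecidableEq V]

lemma join_uniform {x z : V} (hxz : x ≠ z) :
    ∀ {M : List (List V)}, M ≠ [] → (∀ m ∈ M, fp m x z = [x, z]) →
      (M.map (fun b => fp b x z)).flatten.head? = some x ∧
      (M.map (fun b => fp b x z)).flatten.getLast? = some z ∧
      List.Chain' (· ≠ ·) (M.map (fun b => fp b x z)).flatten
  | [], h, _ => absurd rfl h
  | [m], _, hall => by
    rw [show ([m].map (fun b => fp b x z)).flatten = fp m x z by simp,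
      hall m (List.mem_singleton_self m)]
    exact ⟨rfl, rfl, by simp [List.Chain', List.isChain_cons_cons, hxz]⟩
  | m :: m' :: rest, _, hall => by
    obtain ⟨ih1, ih2, ih3⟩ := join_uniform hxz (M := m' :: rest) (by simp)
      (fun q hq => hall q (List.mem_cons_of_mem _ hq))
    have hsplit : ((m :: m' :: rest).map (fun b => fp b x z)).flatten =
        fp m x z ++ ((m' :: rest).map (fun b => fp b x z)).flatten := by simp
    rw [hsplit, hall m (List.mem_cons_self)]
    refine ⟨rfl, ?_, ?_⟩
    · rw [List.getLast?_append, ih2]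
      rfl
    · rw [List.Chain', List.isChain_append]
      refine ⟨by simp [hxz], ih3, ?_⟩
      intro u hu v hv
      simp only [List.getLast?_cons_cons, List.getLast?_singleton, Option.mem_def,
        Option.some_inj] at hu
      rw [ih1] at hv
      simp only [Option.mem_def, Option.some_inj] at hv
      subst hu; subst hv
      exact hxz.symm

lemma const_order {x y : V} (hxy : x ≠ y) :
    ∀ {M : List (List V)}, (∀ m ∈ M, fp m x y = [x, y] ∨ fp m x y = [y, x]) →
      List.Chain' (· ≠ ·) (M.map (fun b => fp b x y)).flatten →
      ∀ {m₀ : List V}, M.head? = some m₀ → fp m₀ x y = [x, y] →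
      ∀ m ∈ M, fp m x y = [x, y]
  | [], _, _, _, h, _ => by simp at h
  | [m], _, _, m₀, hh, h0 => by
    intro q hq
    rcases List.mem_singleton.mp hq with rfl
    have hqm : q = m₀ := by simpa using hh
    subst hqm
    exact h0
  | m :: m' :: rest, hall, hch, m₀, hh, h0 => by
    have hm : fp m x y = [x, y] := by
      have hqm : m = m₀ := by simpa using hh
      subst hqm; exact h0
    have hsplit : ((m :: m' :: rest).map (fun b => fp b x y)).flatten =
        fp m x y ++ ((m' :: rest).map (fun b => fp b x y)).flatten := by simp
    rw [hsplit, hm] at hch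
    obtain ⟨_, hch2, hjun⟩ := List.isChain_append.mp hch
    have hm' : fp m' x y = [x, y] := by
      rcases hall m' (List.mem_cons_of_mem _ (List.mem_cons_self)) with h | h
      · exact h
      · exfalso
        have hhead : ((m' :: rest).map (fun b => fp b x y)).flatten.head? = some y := by
          have : ((m' :: rest).map (fun b => fp b x y)).flatten =
              fp m' x y ++ (rest.map (fun b => fp b x y)).flatten := by simp
          rw [this, h]
          rfl
        exact hjun y (by rfl) y hhead rfl
    have := const_order hxy (M := m' :: rest)
      (fun q hq => hall q (List.mem_cons_of_mem _ hq)) hch2 (by rfl) hm'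
    intro q hq
    rcases List.mem_cons.mp hq with rfl | hq'
    · exact hm
    · exact this q hq'

lemma edge_orders {x y : V} (hxy : x ≠ y) {M : List (List V)}
    (hcx : ∀ m ∈ M, m.count x = 1) (hcy : ∀ m ∈ M, m.count y = 1)
    (hch : List.Chain' (· ≠ ·) (M.map (fun b => fp b x y)).flatten) :
    (∀ m ∈ M, fp m x y = [x, y]) ∨ (∀ m ∈ M, fp m x y = [y, x]) := by
  cases M with
  | nil => exact Or.inl (by simp)
  | cons m₀ M' =>
    have hall : ∀ m ∈ m₀ :: M', fp m x y = [x, y] ∨ fp m x y = [y, x] :=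
      fun m hm => fp_pair_cases hxy (hcx m hm) (hcy m hm)
    rcases hall m₀ (List.mem_cons_self) with h0 | h0
    · exact Or.inl (const_order hxy hall hch (by rfl) h0)
    · right
      have hmapeq : (m₀ :: M').map (fun b => fp b x y) =
          (m₀ :: M').map (fun b => fp b y x) := by
        apply List.map_congr_left
        intro q _
        exact fp_comm q x y
      rw [hmapeq] at hch
      have hall' : ∀ m ∈ m₀ :: M', fp m y x = [y, x] ∨ fp m y x = [x, y] := by
        intro m hm
        rw [← fp_comm]
        exact (hall m hm).symm
      have h0' : fp m₀ y x = [y, x] := by rw [← fp_comm]; exact h0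
      have := const_order hxy.symm hall' hch (by rfl) h0'
      intro m hm
      rw [fp_comm]
      exact this m hm

lemma prop_b0 {x y : V} (hxy : x ≠ y) {b₀ J : List V}
    (hhead : J.head? = some x)
    (hch : List.Chain' (· ≠ ·) (fp b₀ x y ++ J))
    (hcx : b₀.count x ≤ 1) (hcy : b₀.count y ≤ 1)
    (hx : x ∈ b₀) : fp b₀ x y = [x, y] := by
  obtain ⟨_, _, hjun⟩ := List.isChain_append.mp hch
  have hcx1 : b₀.count x = 1 := by
    have := List.count_pos_iff.mpr hx
    omega
  by_cases hy : y ∈ b₀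
  · have hcy1 : b₀.count y = 1 := by
      have := List.count_pos_iff.mpr hy
      omega
    rcases fp_pair_cases hxy hcx1 hcy1 with h | h
    · exact h
    · exfalso
      refine hjun x ?_ x (by rw [hhead]; rfl) rfl
      rw [h]
      rfl
  · exfalso
    have h1 : fp b₀ y x = [x] := fp_eq_single hy hcx1
    rw [fp_comm] at h1
    refine hjun x ?_ x (by rw [hhead]; rfl) rfl
    rw [h1]
    rfl

lemma prop_bk {x y : V} (hxy : x ≠ y) {bk J : List V}
    (hlast : J.getLast? = some y)
    (hch : List.Chain' (· ≠ ·) (J ++ fp bk x y))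
    (hcx : bk.count x ≤ 1) (hcy : bk.count y ≤ 1)
    (hy : y ∈ bk) : fp bk x y = [x, y] := by
  obtain ⟨_, _, hjun⟩ := List.isChain_append.mp hch
  have hcy1 : bk.count y = 1 := by
    have := List.count_pos_iff.mpr hy
    omega
  by_cases hx : x ∈ bk
  · have hcx1 : bk.count x = 1 := by
      have := List.count_pos_iff.mpr hx
      omega
    rcases fp_pair_cases hxy hcx1 hcy1 with h | h
    · exact h
    · exfalso
      refine hjun y (by rw [hlast]; rfl) y ?_ rfl
      rw [h]
      rfl
  · exfalso
    have h1 : fp bk x y = [y] := fp_eq_single hx hcy1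
    refine hjun y (by rw [hlast]; rfl) y ?_ rfl
    rw [h1]
    rfl

end Join

section Thru
variable {V : Type*} [DecidableEq V]

lemma join_shape (b₀ bk : List V) (M : List (List V)) (f : List V → List V) :
    ((b₀ :: (M ++ [bk])).map f).flatten = f b₀ ++ ((M.map f).flatten ++ f bk) := by
  simp

lemma thru {a x y z : V} (hxy : x ≠ y) (hyz : y ≠ z) (hxz : x ≠ z)
    (hxa : x ≠ a) (hya : y ≠ a) (hza : z ≠ a)
    {b₀ bk : List V} {M : List (List V)} (hMne : M ≠ [])
    (h₀ : a ∉ b₀) (hM : ∀ b ∈ M, a ∉ b) (hk : a ∉ bk)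
    (hcx : ∀ m ∈ M, m.count x = 1) (hcy : ∀ m ∈ M, m.count y = 1)
    (hcz : ∀ m ∈ M, m.count z = 1)
    (h₀x : b₀.count x ≤ 1) (h₀y : b₀.count y ≤ 1) (h₀z : b₀.count z ≤ 1)
    (hkx : bk.count x ≤ 1) (hky : bk.count y ≤ 1) (hkz : bk.count z ≤ 1)
    (hchxy : List.Chain' (· ≠ ·) (fp (glue a (b₀ :: (M ++ [bk]))) x y))
    (hchyz : List.Chain' (· ≠ ·) (fp (glue a (b₀ :: (M ++ [bk]))) y z))
    (hoxy : ∀ m ∈ M, fp m x y = [x, y]) (hoyz : ∀ m ∈ M, fp m y z = [y, z]) :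
    List.Chain' (· ≠ ·) (fp (glue a (b₀ :: (M ++ [bk]))) x z) := by
  have hfree : ∀ b ∈ b₀ :: (M ++ [bk]), a ∉ b := by
    intro b hb
    rcases List.mem_cons.mp hb with rfl | hb'
    · exact h₀
    rcases List.mem_append.mp hb' with h | h
    · exact hM b h
    · rw [List.mem_singleton.mp h]; exact hk
  -- interior orders for the skip pair
  have hoxz : ∀ m ∈ M, fp m x z = [x, z] := fun m hm =>
    fp_trans hxy hyz hxz (hcx m hm) (hcy m hm) (hcz m hm) (hoxy m hm) (hoyz m hm)
  obtain ⟨hJxy1, hJxy2, _⟩ := join_uniform hxy hMne hoxy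
  obtain ⟨hJyz1, hJyz2, _⟩ := join_uniform hyz hMne hoyz
  obtain ⟨hJxz1, hJxz2, hJxz3⟩ := join_uniform hxz hMne hoxz
  rw [fp_glue hxa hya _ hfree, join_shape] at hchxy
  rw [fp_glue hya hza _ hfree, join_shape] at hchyz
  rw [fp_glue hxa hza _ hfree, join_shape]
  -- analysis of b₀
  have hb0 : fp b₀ x z = [x, z] ∨ fp b₀ x z = [z] ∨ fp b₀ x z = [] := by
    by_cases hxb : x ∈ b₀
    · have e1 : fp b₀ x y = [x, y] := by
        refine prop_b0 hxy ?_ hchxy h₀x h₀y hxb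
        rw [List.head?_append, hJxy1]
        rfl
      have hyb : y ∈ b₀ := fp_sub_mem (l := b₀) (x := x) (y := y) (by
        rw [e1]; exact List.mem_cons_of_mem _ (List.mem_singleton_self _))
      have e2 : fp b₀ y z = [y, z] := by
        refine prop_b0 hyz ?_ hchyz h₀y h₀z hyb
        rw [List.head?_append, hJyz1]
        rfl
      have hzb : z ∈ b₀ := fp_sub_mem (l := b₀) (x := y) (y := z) (by
        rw [e2]; exact List.mem_cons_of_mem _ (List.mem_singleton_self _))
      have c1 : b₀.count x = 1 := by have := List.count_pos_iff.mpr hxb; omega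
      have c2 : b₀.count y = 1 := by have := List.count_pos_iff.mpr hyb; omega
      have c3 : b₀.count z = 1 := by have := List.count_pos_iff.mpr hzb; omega
      exact Or.inl (fp_trans hxy hyz hxz c1 c2 c3 e1 e2)
    · by_cases hzb : z ∈ b₀
      · have c3 : b₀.count z = 1 := by have := List.count_pos_iff.mpr hzb; omega
        exact Or.inr (Or.inl (fp_eq_single hxb c3))
      · exact Or.inr (Or.inr (fp_eq_nil hxb hzb))
  -- analysis of bk
  have hbk : fp bk x z = [x, z] ∨ fp bk x z = [x] ∨ fp bk x z = [] := by
    by_cases hzk : z ∈ bk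
    · have e2 : fp bk y z = [y, z] := by
        rw [← List.append_assoc] at hchyz
        refine prop_bk hyz ?_ hchyz hky hkz hzk
        rw [List.getLast?_append, hJyz2]
        rfl
      have hyk : y ∈ bk := fp_sub_mem (l := bk) (x := y) (y := z) (by
        rw [e2]; exact List.mem_cons_self)
      have e1 : fp bk x y = [x, y] := by
        rw [← List.append_assoc] at hchxy
        refine prop_bk hxy ?_ hchxy hkx hky hyk
        rw [List.getLast?_append, hJxy2]
        rfl
      have hxk : x ∈ bk := fp_sub_mem (l := bk) (x := x) (y := y) (by
        rw [e1]; exact List.mem_cons_self)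
      have c1 : bk.count x = 1 := by have := List.count_pos_iff.mpr hxk; omega
      have c2 : bk.count y = 1 := by have := List.count_pos_iff.mpr hyk; omega
      have c3 : bk.count z = 1 := by have := List.count_pos_iff.mpr hzk; omega
      exact Or.inl (fp_trans hxy hyz hxz c1 c2 c3 e1 e2)
    · by_cases hxk : x ∈ bk
      · have c1 : bk.count x = 1 := by have := List.count_pos_iff.mpr hxk; omega
        have := fp_eq_single hzk c1
        rw [fp_comm] at this
        exact Or.inr (Or.inl this)
      · exact Or.inr (Or.inr (fp_eq_nil hxk hzk))
  -- assemble
  rw [List.Chain', List.isChain_append]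
  refine ⟨?_, ?_, ?_⟩
  · rcases hb0 with h | h | h <;> rw [h] <;> simp [hxz]
  · rw [List.isChain_append]
    refine ⟨hJxz3, ?_, ?_⟩
    · rcases hbk with h | h | h <;> rw [h] <;> simp [hxz]
    · intro u hu v hv
      rw [hJxz2] at hu
      have hu' : u = z := by simpa [eq_comm] using hu
      subst hu'
      rcases hbk with h | h | h <;> rw [h] at hv
      · have hv' : v = x := by simpa [eq_comm] using hv
        subst hv'; exact hxz.symm
      · have hv' : v = x := by simpa [eq_comm] using hv
        subst hv'; exact hxz.symm
      · simp at hv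
  · intro u hu v hv
    rw [List.head?_append, hJxz1] at hv
    have hv' : v = x := by simpa [eq_comm] using hv
    subst hv'
    rcases hb0 with h | h | h <;> rw [h] at hu
    · have hu' : u = z := by simpa [eq_comm] using hu
      subst hu'; exact hxz.symm
    · have hu' : u = z := by simpa [eq_comm] using hu
      subst hu'; exact hxz.symm
    · simp at hu

end Thru

section IPL
variable {V : Type*} [DecidableEq V]

lemma fp_head {x y : V} (hxy : x ≠ y) :
    ∀ {l : List V}, x ∈ l → l.idxOf x < l.idxOf y → (fp l x y).head? = some x
  | [], hx, _ => absurd hx (by simp)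
  | c :: t, hx, hlt => by
    by_cases hcx : c = x
    · subst hcx
      rw [fp_cons_of t (Or.inl rfl)]
      rfl
    · by_cases hcy : c = y
      · subst hcy
        rw [List.idxOf_cons_self] at hlt
        omega
      · rw [fp_cons_of_not t hcx hcy]
        have hxt : x ∈ t := by
          rcases List.mem_cons.mp hx with h | h
          · exact absurd h.symm hcx
          · exact h
        apply fp_head hxy hxt
        rw [List.idxOf_cons_ne t hcx, List.idxOf_cons_ne t hcy] at hlt
        omega

lemma ipl_dir {w p : List V} {x y : V} (hxy : x ≠ y) (hx : x ∈ w)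
    (hcpx : p.count x = 1) (hcpy : p.count y = 1)
    (hsort : p.Pairwise (fun u v => w.idxOf u ≤ w.idxOf v))
    (hlt : w.idxOf x < w.idxOf y) :
    List.Chain' (· ≠ ·) (fp (p ++ w) x y) ↔ List.Chain' (· ≠ ·) (fp w x y) := by
  have hp : fp p x y = [x, y] := by
    rcases fp_pair_cases hxy hcpx hcpy with h | h
    · exact h
    · exfalso
      have := hsort.filter (fun z => decide (z = x ∨ z = y))
      rw [show p.filter (fun z => decide (z = x ∨ z = y)) = fp p x y from rfl, h] at this
      have := List.rel_of_pairwise_cons this (List.mem_singleton_self x)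
      omega
  obtain ⟨t, ht⟩ : ∃ t, fp w x y = x :: t := by
    have := fp_head hxy hx hlt
    cases hfw : fp w x y with
    | nil => rw [hfw] at this; simp at this
    | cons c t =>
      rw [hfw] at this
      simp only [List.head?_cons, Option.some_inj] at this
      exact ⟨t, by rw [this]⟩
  rw [fp_append, hp, ht]
  constructor
  · intro h
    exact (List.isChain_append.mp h).2.1
  · intro h
    refine List.isChain_append.mpr ⟨by simp [hxy], h, ?_⟩
    intro u hu v hv
    have hu' : u = y := by simpa [eq_comm] using hu
    have hv' : v = x := by simpa [eq_comm] using hv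
    subst hu'; subst hv'
    exact hxy.symm

lemma ipl {w p : List V} (hp1 : ∀ v : V, p.count v = 1)
    (hsort : p.Pairwise (fun u v => w.idxOf u ≤ w.idxOf v))
    {x y : V} (hxy : x ≠ y) (hx : x ∈ w) (hy : y ∈ w) :
    Alternates (p ++ w) x y ↔ Alternates w x y := by
  rcases lt_trichotomy (w.idxOf x) (w.idxOf y) with h | h | h
  · exact ipl_dir hxy hx (hp1 x) (hp1 y) hsort h
  · exact absurd (indexOf_inj hx hy h) hxy
  · have hs : p.Pairwise (fun u v : V => w.idxOf u ≤ w.idxOf v) := hsort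
    rw [alternates_iff, alternates_iff, fp_comm (p ++ w) x y, fp_comm w x y]
    exact ipl_dir hxy.symm hy (hp1 y) (hp1 x) hs h

end IPL

/-- The 7-cycle around the hub vertex `4` in `T2`. -/
def cyc : Fin 7 → Fin 9 := ![0, 1, 2, 5, 8, 7, 3]

set_option maxHeartbeats 2000000 in
lemma adj_of_mem : ∀ x y : Fin 9,
    (x, y) ∈ [((0:Fin 9),(1:Fin 9)),(1,2),(2,5),(5,8),(8,7),(7,3),(3,0),
      (0,4),(1,4),(2,4),(5,4),(8,4),(7,4),(3,4)] → T2.Adj x y := by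
  intro x y hxy
  simp only [List.mem_cons, List.not_mem_nil, or_false, Prod.mk.injEq] at hxy
  rcases hxy with ⟨rfl,rfl⟩|⟨rfl,rfl⟩|⟨rfl,rfl⟩|⟨rfl,rfl⟩|⟨rfl,rfl⟩|⟨rfl,rfl⟩|⟨rfl,rfl⟩|⟨rfl,rfl⟩|⟨rfl,rfl⟩|⟨rfl,rfl⟩|⟨rfl,rfl⟩|⟨rfl,rfl⟩|⟨rfl,rfl⟩|⟨rfl,rfl⟩ <;>
    simp [T2, SimpleGraph.fromEdgeSet_adj, gridEdges33]

set_option maxHeartbeats 2000000 in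
lemma nadj_of_mem : ∀ x y : Fin 9,
    (x, y) ∈ [((0:Fin 9),(2:Fin 9)),(1,5),(2,8),(5,7),(8,3),(7,0),(3,1)] →
    ¬ T2.Adj x y := by
  intro x y hxy
  simp only [List.mem_cons, List.not_mem_nil, or_false, Prod.mk.injEq] at hxy
  rcases hxy with ⟨rfl,rfl⟩|⟨rfl,rfl⟩|⟨rfl,rfl⟩|⟨rfl,rfl⟩|⟨rfl,rfl⟩|⟨rfl,rfl⟩|⟨rfl,rfl⟩ <;>
    simp [T2, SimpleGraph.fromEdgeSet_adj, gridEdges33]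

lemma cyc_adj : ∀ i : Fin 7, T2.Adj (cyc i) (cyc (i + 1)) :=
  fun i => adj_of_mem _ _ (by revert i; decide)
lemma cyc_adj4 : ∀ i : Fin 7, T2.Adj (cyc i) 4 :=
  fun i => adj_of_mem _ _ (by revert i; decide)
lemma cyc_nadj : ∀ i : Fin 7, ¬ T2.Adj (cyc i) (cyc (i + 2)) :=
  fun i => nadj_of_mem _ _ (by revert i; decide)
lemma cyc_ne4 : ∀ i : Fin 7, cyc i ≠ 4 := by decide
lemma cyc_ne1 : ∀ i : Fin 7, cyc i ≠ cyc (i + 1) := by decide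
lemma cyc_ne2 : ∀ i : Fin 7, cyc i ≠ cyc (i + 2) := by decide
lemma fin7_step : ∀ i : Fin 7, i + 1 + 1 = i + 2 := by decide

lemma parity7 {A0 A1 A2 A3 A4 A5 A6 : Prop} (h0 : ¬(A0 ↔ A1)) (h1 : ¬(A1 ↔ A2))
    (h2 : ¬(A2 ↔ A3)) (h3 : ¬(A3 ↔ A4)) (h4 : ¬(A4 ↔ A5)) (h5 : ¬(A5 ↔ A6))
    (h6 : ¬(A6 ↔ A0)) : False := by tauto

/-- The graph `T2` is not word-representable. -/
theorem T2_not_wordRepresentable : ¬ WordRepresentable T2 := by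
  rintro ⟨w₀, hmem₀, halt₀⟩
  classical
  -- prepend the initial permutation to get at least two occurrences of the hub letter 4
  haveI : IsTotal (Fin 9) (fun u v => w₀.idxOf u ≤ w₀.idxOf v) := ⟨fun a b => le_total _ _⟩
  haveI : IsTrans (Fin 9) (fun u v => w₀.idxOf u ≤ w₀.idxOf v) :=
    ⟨fun a b c hab hbc => le_trans hab hbc⟩
  set p := List.insertionSort (fun u v => w₀.idxOf u ≤ w₀.idxOf v) (List.finRange 9) with hpdef
  have hperm := List.perm_insertionSort (fun u v => w₀.idxOf u ≤ w₀.idxOf v) (List.finRange 9)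
  have hp1 : ∀ v : Fin 9, p.count v = 1 := fun v =>
    (hperm.count_eq v).trans (List.count_eq_one_of_mem (List.nodup_finRange 9) (List.mem_finRange v))
  have hsort : p.Pairwise (fun u v => w₀.idxOf u ≤ w₀.idxOf v) :=
    List.pairwise_insertionSort _ _
  set w : List (Fin 9) := p ++ w₀ with hwdef
  have halt : ∀ x y : Fin 9, x ≠ y → (Alternates w x y ↔ T2.Adj x y) :=
    fun x y hxy => (ipl hp1 hsort hxy (hmem₀ x) (hmem₀ y)).trans (halt₀ x y hxy)
  have hcount : 2 ≤ w.count 4 := by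
    have h1 : p.count 4 = 1 := hp1 4
    have h2 : 0 < w₀.count 4 := List.count_pos_iff.mpr (hmem₀ 4)
    rw [hwdef, List.count_append]
    omega
  -- decompose w into blocks separated by 4's
  obtain ⟨B, hBne, hBfree, hBglue, hBlen⟩ := glue_decomp (4 : Fin 9) w
  cases B with
  | nil => exact absurd rfl hBne
  | cons b₀ rest =>
  have hrne : rest ≠ [] := by
    intro h
    subst h
    simp at hBlen
    omega
  obtain ⟨M, bk, hrest⟩ : ∃ M bk, rest = M ++ [bk] :=
    ⟨rest.dropLast, rest.getLast hrne, (List.dropLast_append_getLast hrne).symm⟩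
  subst hrest
  have hMne : M ≠ [] := by
    intro h
    subst h
    simp at hBlen
    omega
  have hGW : glue 4 (b₀ :: (M ++ [bk])) = w := hBglue
  have h₀ : (4:Fin 9) ∉ b₀ := hBfree _ (by simp)
  have hMfree : ∀ b ∈ M, (4:Fin 9) ∉ b := fun b hb => hBfree b (by simp [hb])
  have hkfree : (4:Fin 9) ∉ bk := hBfree bk (by simp)
  -- hub alternation gives occurrence counts in the blocks
  have hhub : ∀ i : Fin 7,
      b₀.count (cyc i) ≤ 1 ∧ (∀ m ∈ M, m.count (cyc i) = 1) ∧ bk.count (cyc i) ≤ 1 := by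
    intro i
    have halt4 : Alternates w (cyc i) 4 := (halt _ 4 (cyc_ne4 i)).mpr (cyc_adj4 i)
    rw [alternates_iff, ← hGW] at halt4
    exact hub_counts (cyc_ne4 i) h₀ hMfree hkfree halt4
  -- edge alternations as chains in glue form
  have hchain : ∀ i : Fin 7,
      List.Chain' (· ≠ ·) (fp (glue 4 (b₀ :: (M ++ [bk]))) (cyc i) (cyc (i + 1))) := by
    intro i
    have := (halt _ _ (cyc_ne1 i)).mpr (cyc_adj i)
    rwa [alternates_iff, ← hGW] at this
  -- interior orders of cycle edges are constant across the interior blocks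
  have hdisj : ∀ i : Fin 7,
      (∀ m ∈ M, fp m (cyc i) (cyc (i + 1)) = [cyc i, cyc (i + 1)]) ∨
      (∀ m ∈ M, fp m (cyc i) (cyc (i + 1)) = [cyc (i + 1), cyc i]) := by
    intro i
    have hch := hchain i
    have hfree : ∀ b ∈ b₀ :: (M ++ [bk]), (4:Fin 9) ∉ b := by
      intro b hb
      rcases List.mem_cons.mp hb with rfl | hb'
      · exact h₀
      rcases List.mem_append.mp hb' with h | h
      · exact hMfree b h
      · rw [List.mem_singleton.mp h]; exact hkfree
    rw [fp_glue (cyc_ne4 i) (cyc_ne4 (i+1)) _ hfree, join_shape] at hch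
    have hmid : List.Chain' (· ≠ ·)
        ((M.map (fun b => fp b (cyc i) (cyc (i + 1)))).flatten) :=
      hch.infix ⟨fp b₀ (cyc i) (cyc (i+1)), fp bk (cyc i) (cyc (i+1)), by
        rw [List.append_assoc]⟩
    exact edge_orders (cyc_ne1 i) (fun m hm => ((hhub i).2.1 m hm))
      (fun m hm => ((hhub (i+1)).2.1 m hm)) hmid
  set P : Fin 7 → Prop :=
    fun i => ∀ m ∈ M, fp m (cyc i) (cyc (i + 1)) = [cyc i, cyc (i + 1)] with hPdef
  have hstep : ∀ i : Fin 7, ¬ (P i ↔ P (i + 1)) := by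
    intro i hiff
    have hz1 : cyc (i + 1 + 1) = cyc (i + 2) := by rw [fin7_step]
    by_cases hPi : P i
    · have hPi1 : P (i + 1) := hiff.mp hPi
      have hoyz : ∀ m ∈ M, fp m (cyc (i+1)) (cyc (i+2)) = [cyc (i+1), cyc (i+2)] := by
        intro m hm
        have := hPi1 m hm
        rwa [hz1] at this
      have hchyz : List.Chain' (· ≠ ·)
          (fp (glue 4 (b₀ :: (M ++ [bk]))) (cyc (i+1)) (cyc (i+2))) := by
        have := hchain (i+1)
        rwa [hz1] at this
      have hth := thru (cyc_ne1 i) (by rw [← hz1]; exact cyc_ne1 (i+1)) (cyc_ne2 i)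
        (cyc_ne4 i) (cyc_ne4 (i+1)) (cyc_ne4 (i+2)) hMne h₀ hMfree hkfree
        (fun m hm => (hhub i).2.1 m hm) (fun m hm => (hhub (i+1)).2.1 m hm)
        (fun m hm => (hhub (i+2)).2.1 m hm)
        (hhub i).1 (hhub (i+1)).1 (hhub (i+2)).1
        (hhub i).2.2 (hhub (i+1)).2.2 (hhub (i+2)).2.2
        (hchain i) hchyz hPi hoyz
      rw [hGW, ← alternates_iff] at hth
      exact cyc_nadj i ((halt _ _ (cyc_ne2 i)).mp hth)
    · have hPi1 : ¬ P (i + 1) := fun h => hPi (hiff.mpr h)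
      have hrev_i : ∀ m ∈ M, fp m (cyc i) (cyc (i+1)) = [cyc (i+1), cyc i] :=
        (hdisj i).resolve_left hPi
      have hrev_i1 : ∀ m ∈ M, fp m (cyc (i+1)) (cyc (i+2)) = [cyc (i+2), cyc (i+1)] := by
        intro m hm
        have := ((hdisj (i+1)).resolve_left hPi1) m hm
        rwa [hz1] at this
      have hoxy : ∀ m ∈ M, fp m (cyc (i+2)) (cyc (i+1)) = [cyc (i+2), cyc (i+1)] := by
        intro m hm
        rw [fp_comm]
        exact hrev_i1 m hm
      have hoyz : ∀ m ∈ M, fp m (cyc (i+1)) (cyc i) = [cyc (i+1), cyc i] := by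
        intro m hm
        rw [fp_comm]
        exact hrev_i m hm
      have hchzy : List.Chain' (· ≠ ·)
          (fp (glue 4 (b₀ :: (M ++ [bk]))) (cyc (i+2)) (cyc (i+1))) := by
        have := hchain (i+1)
        rw [hz1] at this
        rwa [fp_comm] at this
      have hchyx : List.Chain' (· ≠ ·)
          (fp (glue 4 (b₀ :: (M ++ [bk]))) (cyc (i+1)) (cyc i)) := by
        have := hchain i
        rwa [fp_comm] at this
      have hth := thru (a := (4:Fin 9))
        (Ne.symm (by rw [← hz1]; exact cyc_ne1 (i+1))) (Ne.symm (cyc_ne1 i))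
        (Ne.symm (cyc_ne2 i))
        (cyc_ne4 (i+2)) (cyc_ne4 (i+1)) (cyc_ne4 i) hMne h₀ hMfree hkfree
        (fun m hm => (hhub (i+2)).2.1 m hm) (fun m hm => (hhub (i+1)).2.1 m hm)
        (fun m hm => (hhub i).2.1 m hm)
        (hhub (i+2)).1 (hhub (i+1)).1 (hhub i).1
        (hhub (i+2)).2.2 (hhub (i+1)).2.2 (hhub i).2.2
        hchzy hchyx hoxy hoyz
      rw [hGW, ← alternates_iff] at hth
      exact cyc_nadj i (((halt _ _ (Ne.symm (cyc_ne2 i))).mp hth).symm)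
  have e1 : (0:Fin 7) + 1 = 1 := by decide
  have e2 : (1:Fin 7) + 1 = 2 := by decide
  have e3 : (2:Fin 7) + 1 = 3 := by decide
  have e4 : (3:Fin 7) + 1 = 4 := by decide
  have e5 : (4:Fin 7) + 1 = 5 := by decide
  have e6 : (5:Fin 7) + 1 = 6 := by decide
  have e7 : (6:Fin 7) + 1 = 0 := by decide
  have h0 := hstep 0
  have h1 := hstep 1
  have h2 := hstep 2
  have h3 := hstep 3
  have h4 := hstep 4
  have h5 := hstep 5
  have h6 := hstep 6
  rw [e1] at h0
  rw [e2] at h1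
  rw [e3] at h2
  rw [e4] at h3
  rw [e5] at h4
  rw [e6] at h5
  rw [e7] at h6
  exact parity7 h0 h1 h2 h3 h4 h5 h6
end

section
/- The graph T1 is not 3-colorable. -/
lemma adj01 : T1.Adj 0 1 := by simp [T1, gridEdges33, SimpleGraph.fromEdgeSet_adj]
lemma adj12 : T1.Adj 1 2 := by simp [T1, gridEdges33, SimpleGraph.fromEdgeSet_adj]
lemma adj34 : T1.Adj 3 4 := by simp [T1, gridEdges33, SimpleGraph.fromEdgeSet_adj]
lemma adj45 : T1.Adj 4 5 := by simp [T1, gridEdges33, SimpleGraph.fromEdgeSet_adj]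
lemma adj67 : T1.Adj 6 7 := by simp [T1, gridEdges33, SimpleGraph.fromEdgeSet_adj]
lemma adj78 : T1.Adj 7 8 := by simp [T1, gridEdges33, SimpleGraph.fromEdgeSet_adj]
lemma adj03 : T1.Adj 0 3 := by simp [T1, gridEdges33, SimpleGraph.fromEdgeSet_adj]
lemma adj14 : T1.Adj 1 4 := by simp [T1, gridEdges33, SimpleGraph.fromEdgeSet_adj]
lemma adj25 : T1.Adj 2 5 := by simp [T1, gridEdges33, SimpleGraph.fromEdgeSet_adj]
lemma adj36 : T1.Adj 3 6 := by simp [T1, gridEdges33, SimpleGraph.fromEdgeSet_adj]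
lemma adj47 : T1.Adj 4 7 := by simp [T1, gridEdges33, SimpleGraph.fromEdgeSet_adj]
lemma adj58 : T1.Adj 5 8 := by simp [T1, gridEdges33, SimpleGraph.fromEdgeSet_adj]
lemma adj13 : T1.Adj 1 3 := by simp [T1, gridEdges33, SimpleGraph.fromEdgeSet_adj]
lemma adj15 : T1.Adj 1 5 := by simp [T1, gridEdges33, SimpleGraph.fromEdgeSet_adj]
lemma adj46 : T1.Adj 4 6 := by simp [T1, gridEdges33, SimpleGraph.fromEdgeSet_adj]
lemma adj57 : T1.Adj 5 7 := by simp [T1, gridEdges33, SimpleGraph.fromEdgeSet_adj]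

set_option synthInstance.maxSize 2000 in
set_option synthInstance.maxHeartbeats 1000000 in
lemma key : ∀ a b c d e f g h i : Fin 3, ¬(a ≠ b ∧ b ≠ c ∧ d ≠ e ∧ e ≠ f ∧ g ≠ h ∧ h ≠ i ∧ a ≠ d ∧ b ≠ e ∧ c ≠ f ∧ d ≠ g ∧ e ≠ h ∧ f ≠ i ∧ b ≠ d ∧ b ≠ f ∧ e ≠ g ∧ f ≠ h) := by decide

/-- The graph `T1` is not 3-colorable. -/
theorem T1_not_colorable_three : ¬ T1.Colorable 3 := by
  rintro ⟨C⟩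
  exact key (C 0) (C 1) (C 2) (C 3) (C 4) (C 5) (C 6) (C 7) (C 8) ⟨C.valid adj01, C.valid adj12, C.valid adj34, C.valid adj45, C.valid adj67, C.valid adj78, C.valid adj03, C.valid adj14, C.valid adj25, C.valid adj36, C.valid adj47, C.valid adj58, C.valid adj13, C.valid adj15, C.valid adj46, C.valid adj57⟩
end

section
/- For every choice function d : {0,1}×{0,1} → {0,1}, if the triangulation T_d of the 2×2-cell grid graph (on the 3×3 vertex set {0,1,2}×{0,1,2}) is not 3-colorable, then T_d is isomorphic as a simple graph to T1 or to T2. -/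
/-- The triangulation of the `m × n` grid graph (vertex set `{0,…,m} × {0,…,n}`)
determined by the choice `d` of a diagonal for each cell: all grid edges, plus for
each cell `(i,j)` the main diagonal `{(i,j),(i+1,j+1)}` if `d i j = 0` and the
anti-diagonal `{(i+1,j),(i,j+1)}` if `d i j = 1`. -/
def GridTri (m n : ℕ) (d : ℕ → ℕ → Fin 2) :
    SimpleGraph (Fin (m + 1) × Fin (n + 1)) :=
  SimpleGraph.fromRel fun p q =>
    (q.1.val = p.1.val + 1 ∧ q.2.val = p.2.val) ∨
    (q.1.val = p.1.val ∧ q.2.val = p.2.val + 1) ∨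
    (d p.1.val p.2.val = 0 ∧ q.1.val = p.1.val + 1 ∧ q.2.val = p.2.val + 1) ∨
    (d q.1.val p.2.val = 1 ∧ p.1.val = q.1.val + 1 ∧ q.2.val = p.2.val + 1)

instance (m n : ℕ) (d : ℕ → ℕ → Fin 2) : DecidableRel (GridTri m n d).Adj := fun p q =>
  decidable_of_iff _ (SimpleGraph.fromRel_adj _ p q).symm

/-- A concrete choice function given by four values for the four relevant cells. -/
def dfun (a b c e : Fin 2) : ℕ → ℕ → Fin 2 := fun i j =>
  if i = 0 then (if j = 0 then a else b) else (if j = 0 then c else e)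

lemma GridTri_congr (d d' : ℕ → ℕ → Fin 2)
    (hagree : ∀ i j, i ≤ 1 → j ≤ 1 → d i j = d' i j) :
    GridTri 2 2 d = GridTri 2 2 d' := by
  have key : ∀ (e : ℕ → ℕ → Fin 2) (p q : Fin 3 × Fin 3),
      ((q.1.val = p.1.val + 1 ∧ q.2.val = p.2.val) ∨
       (q.1.val = p.1.val ∧ q.2.val = p.2.val + 1) ∨
       (e p.1.val p.2.val = 0 ∧ q.1.val = p.1.val + 1 ∧ q.2.val = p.2.val + 1) ∨
       (e q.1.val p.2.val = 1 ∧ p.1.val = q.1.val + 1 ∧ q.2.val = p.2.val + 1)) →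
      ∀ e' : ℕ → ℕ → Fin 2, (∀ i j, i ≤ 1 → j ≤ 1 → e i j = e' i j) →
      ((q.1.val = p.1.val + 1 ∧ q.2.val = p.2.val) ∨
       (q.1.val = p.1.val ∧ q.2.val = p.2.val + 1) ∨
       (e' p.1.val p.2.val = 0 ∧ q.1.val = p.1.val + 1 ∧ q.2.val = p.2.val + 1) ∨
       (e' q.1.val p.2.val = 1 ∧ p.1.val = q.1.val + 1 ∧ q.2.val = p.2.val + 1)) := by
    rintro e p q (hc | hc | ⟨hd, hc⟩ | ⟨hd, hc⟩) e' ha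
    · exact Or.inl hc
    · exact Or.inr (Or.inl hc)
    · refine Or.inr (Or.inr (Or.inl ⟨?_, hc⟩))
      rw [← ha p.1.val p.2.val (by omega) (by omega)]
      exact hd
    · refine Or.inr (Or.inr (Or.inr ⟨?_, hc⟩))
      rw [← ha q.1.val p.2.val (by omega) (by omega)]
      exact hd
  have hagree' : ∀ i j, i ≤ 1 → j ≤ 1 → d' i j = d i j := fun i j hi hj =>
    (hagree i j hi hj).symm
  unfold GridTri
  congr 1
  ext p q
  constructor
  · intro hr; exact key d p q hr d' hagree
  · intro hr; exact key d' p q hr d hagree' 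

lemma agree (d : ℕ → ℕ → Fin 2) (a b c e : Fin 2)
    (h00 : d 0 0 = a) (h01 : d 0 1 = b) (h10 : d 1 0 = c) (h11 : d 1 1 = e) :
    ∀ i j, i ≤ 1 → j ≤ 1 → d i j = dfun a b c e i j := by
  intro i j hi hj
  interval_cases i <;> interval_cases j <;> simp [dfun, h00, h01, h10, h11]

def edgesT1 : Finset (Sym2 (Fin 9)) :=
  {s(0, 1), s(1, 2), s(3, 4), s(4, 5), s(6, 7), s(7, 8),
   s(0, 3), s(1, 4), s(2, 5), s(3, 6), s(4, 7), s(5, 8),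
   s(1, 3), s(1, 5), s(4, 6), s(5, 7)}

def edgesT2 : Finset (Sym2 (Fin 9)) :=
  {s(0, 1), s(1, 2), s(3, 4), s(4, 5), s(6, 7), s(7, 8),
   s(0, 3), s(1, 4), s(2, 5), s(3, 6), s(4, 7), s(5, 8),
   s(0, 4), s(2, 4), s(4, 8), s(3, 7)}

instance : DecidableRel (SimpleGraph.fromEdgeSet (↑edgesT1 : Set (Sym2 (Fin 9)))).Adj :=
  fun a b => decidable_of_iff (s(a, b) ∈ edgesT1 ∧ a ≠ b)
    (by rw [SimpleGraph.fromEdgeSet_adj, Finset.mem_coe])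

instance : DecidableRel (SimpleGraph.fromEdgeSet (↑edgesT2 : Set (Sym2 (Fin 9)))).Adj :=
  fun a b => decidable_of_iff (s(a, b) ∈ edgesT2 ∧ a ≠ b)
    (by rw [SimpleGraph.fromEdgeSet_adj, Finset.mem_coe])

lemma T1_eq : T1 = SimpleGraph.fromEdgeSet (↑edgesT1 : Set (Sym2 (Fin 9))) := by
  unfold T1 gridEdges33 edgesT1
  congr 1
  ext x
  simp [Set.mem_union, Set.mem_insert_iff]
  tauto

lemma T2_eq : T2 = SimpleGraph.fromEdgeSet (↑edgesT2 : Set (Sym2 (Fin 9))) := by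
  unfold T2 gridEdges33 edgesT2
  congr 1
  ext x
  simp [Set.mem_union, Set.mem_insert_iff]
  tauto

/-- Every non-3-colorable triangulation of the 2×2-cell grid (on the 3×3 vertex set)
is isomorphic to `T1` or to `T2`. -/
theorem non_three_colorable_triangulation_of_two_by_two_grid
    (d : ℕ → ℕ → Fin 2) (h : ¬ (GridTri 2 2 d).Colorable 3) :
    Nonempty (GridTri 2 2 d ≃g T1) ∨ Nonempty (GridTri 2 2 d ≃g T2) := by
  have two : ∀ x : Fin 2, x = 0 ∨ x = 1 := by decide
  rcases two (d 0 0) with h00 | h00 <;> rcases two (d 0 1) with h01 | h01 <;>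
    rcases two (d 1 0) with h10 | h10 <;> rcases two (d 1 1) with h11 | h11
  · -- d = (0, 0, 0, 0)
    rw [GridTri_congr d (dfun 0 0 0 0) (agree d 0 0 0 0 h00 h01 h10 h11)] at h ⊢
    exact absurd ⟨SimpleGraph.Coloring.mk (fun p => ![![0, 1, 2], ![1, 2, 0], ![2, 0, 1]] p.1 p.2) (by decide)⟩ h
  · -- d = (0, 0, 0, 1)
    rw [GridTri_congr d (dfun 0 0 0 1) (agree d 0 0 0 1 h00 h01 h10 h11)] at h ⊢
    left
    rw [T1_eq]
    exact ⟨⟨⟨fun p => ![![6, 3, 0], ![7, 4, 1], ![8, 5, 2]] p.1 p.2, fun k => ![(0, 2), (1, 2), (2, 2), (0, 1), (1, 1), (2, 1), (0, 0), (1, 0), (2, 0)] k, by decide, by decide⟩, by decide⟩⟩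
  · -- d = (0, 0, 1, 0)
    rw [GridTri_congr d (dfun 0 0 1 0) (agree d 0 0 1 0 h00 h01 h10 h11)] at h ⊢
    right
    rw [T2_eq]
    exact ⟨⟨⟨fun p => ![![0, 3, 6], ![1, 4, 7], ![2, 5, 8]] p.1 p.2, fun k => ![(0, 0), (1, 0), (2, 0), (0, 1), (1, 1), (2, 1), (0, 2), (1, 2), (2, 2)] k, by decide, by decide⟩, by decide⟩⟩
  · -- d = (0, 0, 1, 1)
    rw [GridTri_congr d (dfun 0 0 1 1) (agree d 0 0 1 1 h00 h01 h10 h11)] at h ⊢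
    exact absurd ⟨SimpleGraph.Coloring.mk (fun p => ![![0, 1, 2], ![1, 2, 0], ![0, 1, 2]] p.1 p.2) (by decide)⟩ h
  · -- d = (0, 1, 0, 0)
    rw [GridTri_congr d (dfun 0 1 0 0) (agree d 0 1 0 0 h00 h01 h10 h11)] at h ⊢
    right
    rw [T2_eq]
    exact ⟨⟨⟨fun p => ![![0, 1, 2], ![3, 4, 5], ![6, 7, 8]] p.1 p.2, fun k => ![(0, 0), (0, 1), (0, 2), (1, 0), (1, 1), (1, 2), (2, 0), (2, 1), (2, 2)] k, by decide, by decide⟩, by decide⟩⟩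
  · -- d = (0, 1, 0, 1)
    rw [GridTri_congr d (dfun 0 1 0 1) (agree d 0 1 0 1 h00 h01 h10 h11)] at h ⊢
    exact absurd ⟨SimpleGraph.Coloring.mk (fun p => ![![0, 1, 0], ![1, 2, 1], ![2, 0, 2]] p.1 p.2) (by decide)⟩ h
  · -- d = (0, 1, 1, 0)
    rw [GridTri_congr d (dfun 0 1 1 0) (agree d 0 1 1 0 h00 h01 h10 h11)] at h ⊢
    exact absurd ⟨SimpleGraph.Coloring.mk (fun p => ![![0, 1, 0], ![1, 2, 1], ![0, 1, 0]] p.1 p.2) (by decide)⟩ h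
  · -- d = (0, 1, 1, 1)
    rw [GridTri_congr d (dfun 0 1 1 1) (agree d 0 1 1 1 h00 h01 h10 h11)] at h ⊢
    right
    rw [T2_eq]
    exact ⟨⟨⟨fun p => ![![2, 1, 0], ![5, 4, 3], ![8, 7, 6]] p.1 p.2, fun k => ![(0, 2), (0, 1), (0, 0), (1, 2), (1, 1), (1, 0), (2, 2), (2, 1), (2, 0)] k, by decide, by decide⟩, by decide⟩⟩
  · -- d = (1, 0, 0, 0)
    rw [GridTri_congr d (dfun 1 0 0 0) (agree d 1 0 0 0 h00 h01 h10 h11)] at h ⊢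
    left
    rw [T1_eq]
    exact ⟨⟨⟨fun p => ![![2, 1, 0], ![5, 4, 3], ![8, 7, 6]] p.1 p.2, fun k => ![(0, 2), (0, 1), (0, 0), (1, 2), (1, 1), (1, 0), (2, 2), (2, 1), (2, 0)] k, by decide, by decide⟩, by decide⟩⟩
  · -- d = (1, 0, 0, 1)
    rw [GridTri_congr d (dfun 1 0 0 1) (agree d 1 0 0 1 h00 h01 h10 h11)] at h ⊢
    exact absurd ⟨SimpleGraph.Coloring.mk (fun p => ![![0, 1, 0], ![2, 0, 2], ![0, 1, 0]] p.1 p.2) (by decide)⟩ h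
  · -- d = (1, 0, 1, 0)
    rw [GridTri_congr d (dfun 1 0 1 0) (agree d 1 0 1 0 h00 h01 h10 h11)] at h ⊢
    exact absurd ⟨SimpleGraph.Coloring.mk (fun p => ![![0, 1, 0], ![2, 0, 2], ![1, 2, 1]] p.1 p.2) (by decide)⟩ h
  · -- d = (1, 0, 1, 1)
    rw [GridTri_congr d (dfun 1 0 1 1) (agree d 1 0 1 1 h00 h01 h10 h11)] at h ⊢
    left
    rw [T1_eq]
    exact ⟨⟨⟨fun p => ![![0, 1, 2], ![3, 4, 5], ![6, 7, 8]] p.1 p.2, fun k => ![(0, 0), (0, 1), (0, 2), (1, 0), (1, 1), (1, 2), (2, 0), (2, 1), (2, 2)] k, by decide, by decide⟩, by decide⟩⟩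
  · -- d = (1, 1, 0, 0)
    rw [GridTri_congr d (dfun 1 1 0 0) (agree d 1 1 0 0 h00 h01 h10 h11)] at h ⊢
    exact absurd ⟨SimpleGraph.Coloring.mk (fun p => ![![0, 1, 2], ![2, 0, 1], ![0, 1, 2]] p.1 p.2) (by decide)⟩ h
  · -- d = (1, 1, 0, 1)
    rw [GridTri_congr d (dfun 1 1 0 1) (agree d 1 1 0 1 h00 h01 h10 h11)] at h ⊢
    left
    rw [T1_eq]
    exact ⟨⟨⟨fun p => ![![0, 3, 6], ![1, 4, 7], ![2, 5, 8]] p.1 p.2, fun k => ![(0, 0), (1, 0), (2, 0), (0, 1), (1, 1), (2, 1), (0, 2), (1, 2), (2, 2)] k, by decide, by decide⟩, by decide⟩⟩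
  · -- d = (1, 1, 1, 0)
    rw [GridTri_congr d (dfun 1 1 1 0) (agree d 1 1 1 0 h00 h01 h10 h11)] at h ⊢
    right
    rw [T2_eq]
    exact ⟨⟨⟨fun p => ![![6, 3, 0], ![7, 4, 1], ![8, 5, 2]] p.1 p.2, fun k => ![(0, 2), (1, 2), (2, 2), (0, 1), (1, 1), (2, 1), (0, 0), (1, 0), (2, 0)] k, by decide, by decide⟩, by decide⟩⟩
  · -- d = (1, 1, 1, 1)
    rw [GridTri_congr d (dfun 1 1 1 1) (agree d 1 1 1 1 h00 h01 h10 h11)] at h ⊢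
    exact absurd ⟨SimpleGraph.Coloring.mk (fun p => ![![0, 1, 2], ![2, 0, 1], ![1, 2, 0]] p.1 p.2) (by decide)⟩ h
end

section
/- For every n ≥ 1, the graph obtained from the path graph on n vertices by replacing each vertex with a module K2 — namely, the graph with vertex set {1,…,n}×{0,1} in which distinct vertices (i,a) and (j,b) are adjacent if and only if i = j or |i−j| = 1 — is word-representable. -/
/-- The graph obtained from the path graph on `n` vertices by replacing each vertex by
a module `K₂`: vertices `(i, a)` with `i : Fin n`, `a : Fin 2`, with distinct vertices
`(i, a)` and `(j, b)` adjacent iff `i = j` or `|i - j| = 1`. -/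
def PathK2 (n : ℕ) : SimpleGraph (Fin n × Fin 2) :=
  SimpleGraph.fromRel fun p q =>
    p.1 = q.1 ∨ p.1.val + 1 = q.1.val ∨ q.1.val + 1 = p.1.val


namespace PathK2Proof

/-- The `i`-th vertex letter (index clamped to `m`). -/
def vtx (m i : ℕ) (a : Fin 2) : Fin (m + 1) × Fin 2 :=
  (⟨min i m, by omega⟩, a)

lemma vtx_eq_iff {m i j : ℕ} (hi : i ≤ m) (hj : j ≤ m) {a b : Fin 2} :
    vtx m i a = vtx m j b ↔ (i = j ∧ a = b) := by
  simp [vtx, Prod.ext_iff, Fin.ext_iff, Nat.min_eq_left hi, Nat.min_eq_left hj]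

/-- Block `i` of the representing word. -/
def Bblk (m i : ℕ) : List (Fin (m + 1) × Fin 2) :=
  (if i ≤ m then [vtx m i 0, vtx m i 1] else []) ++
    (if 1 ≤ i then [vtx m (i - 1) 0, vtx m (i - 1) 1] else [])

/-- The representing word. -/
def wrd (m : ℕ) : List (Fin (m + 1) × Fin 2) :=
  (List.range (m + 2)).flatMap (Bblk m)

lemma bind4 {α : Type*} (m : ℕ) (g : ℕ → List α) (s t u v : ℕ)
    (hst : s < t) (htu : t < u) (huv : u < v)
    (hsupp : ∀ i < m, i ≠ s → i ≠ t → i ≠ u → i ≠ v → g i = []) :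
    (List.range m).flatMap g =
      (if s < m then g s else []) ++ (if t < m then g t else []) ++
      (if u < m then g u else []) ++ (if v < m then g v else []) := by
  induction m with
  | zero => simp
  | succ m ih =>
    rw [List.range_succ, List.flatMap_append, ih (fun i hi => hsupp i (by omega))]
    simp only [List.flatMap_cons, List.flatMap_nil, List.append_nil]
    by_cases hs : s = m
    · subst hs
      rw [if_neg (by omega), if_neg (by omega), if_neg (by omega), if_neg (by omega),
        if_pos (by omega), if_neg (by omega), if_neg (by omega), if_neg (by omega)]
      simp
    · by_cases ht : t = m
      · subst ht
        rw [if_pos (by omega), if_neg (by omega), if_neg (by omega), if_neg (by omega),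
          if_pos (by omega), if_pos (by omega), if_neg (by omega), if_neg (by omega)]
        simp
      · by_cases hu : u = m
        · subst hu
          rw [if_pos (by omega), if_pos (by omega), if_neg (by omega), if_neg (by omega),
            if_pos (by omega), if_pos (by omega), if_pos (by omega), if_neg (by omega)]
          simp
        · by_cases hv : v = m
          · subst hv
            rw [if_pos (by omega), if_pos (by omega), if_pos (by omega), if_neg (by omega),
              if_pos (by omega), if_pos (by omega), if_pos (by omega), if_pos (by omega)]
            simp
          · rw [hsupp m (by omega) (fun h => hs h.symm) (fun h => ht h.symm)
              (fun h => hu h.symm) (fun h => hv h.symm),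
              if_congr (show (s < m + 1) ↔ s < m by omega) rfl rfl,
              if_congr (show (t < m + 1) ↔ t < m by omega) rfl rfl,
              if_congr (show (u < m + 1) ↔ u < m by omega) rfl rfl,
              if_congr (show (v < m + 1) ↔ v < m by omega) rfl rfl]
            simp

end PathK2Proof

namespace PathK2Proof

lemma filter_pair_list (m k I J : ℕ) (a b : Fin 2) (hk : k ≤ m) (hI : I ≤ m) (hJ : J ≤ m)
    (h1 : k ≠ I) (h2 : k ≠ J) :
    [vtx m k 0, vtx m k 1].filter (fun z => decide (z = vtx m I a ∨ z = vtx m J b)) = [] := by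
  simp [List.filter_cons, decide_eq_true_eq, vtx_eq_iff hk hI, vtx_eq_iff hk hJ, h1, h2]

lemma filter_pair_keep_left (m k J : ℕ) (a b : Fin 2) (hk : k ≤ m) (hJ : J ≤ m) (h : k ≠ J) :
    [vtx m k 0, vtx m k 1].filter (fun z => decide (z = vtx m k a ∨ z = vtx m J b)) =
      [vtx m k a] := by
  fin_cases a <;>
    simp [List.filter_cons, decide_eq_true_eq, vtx_eq_iff hk hk, vtx_eq_iff hk hJ, h]

lemma filter_pair_keep_right (m k I : ℕ) (a b : Fin 2) (hk : k ≤ m) (hI : I ≤ m) (h : k ≠ I) :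
    [vtx m k 0, vtx m k 1].filter (fun z => decide (z = vtx m I a ∨ z = vtx m k b)) =
      [vtx m k b] := by
  fin_cases b <;>
    simp [List.filter_cons, decide_eq_true_eq, vtx_eq_iff hk hk, vtx_eq_iff hk hI, h]

lemma filter_pair_keep_both (m k : ℕ) (a b : Fin 2) (hk : k ≤ m) (hab : a ≠ b) :
    [vtx m k 0, vtx m k 1].filter (fun z => decide (z = vtx m k a ∨ z = vtx m k b)) =
      [vtx m k 0, vtx m k 1] := by
  fin_cases a <;> fin_cases b <;>
    first
      | exact absurd rfl hab
      | simp [List.filter_cons, decide_eq_true_eq, vtx_eq_iff hk hk]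

lemma filter_Bblk (m i : ℕ) (p : Fin (m + 1) × Fin 2 → Bool) :
    (Bblk m i).filter p =
      (if i ≤ m then [vtx m i 0, vtx m i 1].filter p else []) ++
        (if 1 ≤ i then [vtx m (i - 1) 0, vtx m (i - 1) 1].filter p else []) := by
  rw [Bblk, List.filter_append, apply_ite (List.filter p), apply_ite (List.filter p),
    List.filter_nil]

end PathK2Proof

namespace PathK2Proof

lemma filter_wrd_same (m I : ℕ) (hI : I ≤ m) (a b : Fin 2) (hab : a ≠ b) :
    (wrd m).filter (fun z => decide (z = vtx m I a ∨ z = vtx m I b)) =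
      [vtx m I 0, vtx m I 1, vtx m I 0, vtx m I 1] := by
  rw [wrd, List.filter_flatMap,
    bind4 (m + 2) _ I (I + 1) (m + I + 2) (m + I + 3) (by omega) (by omega) (by omega)
      (fun i hi h1 h2 _ _ => by
        rw [filter_Bblk]
        by_cases hm : i ≤ m
        · by_cases h1i : 1 ≤ i
          · rw [if_pos hm, if_pos h1i, filter_pair_list m i I I a b hm hI hI h1 h1,
              filter_pair_list m (i - 1) I I a b (by omega) hI hI (by omega) (by omega)]
            simp
          · rw [if_pos hm, if_neg h1i, filter_pair_list m i I I a b hm hI hI h1 h1]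
            simp
        · by_cases h1i : 1 ≤ i
          · rw [if_neg hm, if_pos h1i,
              filter_pair_list m (i - 1) I I a b (by omega) hI hI (by omega) (by omega)]
            simp
          · rw [if_neg hm, if_neg h1i]
            simp),
    if_pos (by omega), if_pos (by omega), if_neg (by omega), if_neg (by omega),
    filter_Bblk, filter_Bblk, if_pos hI, if_pos (show 1 ≤ I + 1 by omega),
    filter_pair_keep_both m I a b hI hab]
  have e1 : (if 1 ≤ I then
      [vtx m (I - 1) 0, vtx m (I - 1) 1].filter
        (fun z => decide (z = vtx m I a ∨ z = vtx m I b)) else []) = [] := by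
    by_cases h1i : 1 ≤ I
    · rw [if_pos h1i, filter_pair_list m (I - 1) I I a b (by omega) hI hI (by omega) (by omega)]
    · rw [if_neg h1i]
  have e2 : (if I + 1 ≤ m then
      [vtx m (I + 1) 0, vtx m (I + 1) 1].filter
        (fun z => decide (z = vtx m I a ∨ z = vtx m I b)) else []) = [] := by
    by_cases h1i : I + 1 ≤ m
    · rw [if_pos h1i, filter_pair_list m (I + 1) I I a b (by omega) hI hI (by omega) (by omega)]
    · rw [if_neg h1i]
  rw [e1, e2, show I + 1 - 1 = I from rfl, filter_pair_keep_both m I a b hI hab]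
  simp

end PathK2Proof

namespace PathK2Proof

lemma filter_wrd_adj (m I : ℕ) (hI1 : I + 1 ≤ m) (a b : Fin 2) :
    (wrd m).filter (fun z => decide (z = vtx m I a ∨ z = vtx m (I + 1) b)) =
      [vtx m I a, vtx m (I + 1) b, vtx m I a, vtx m (I + 1) b] := by
  have hI : I ≤ m := by omega
  rw [wrd, List.filter_flatMap,
    bind4 (m + 2) _ I (I + 1) (I + 2) (m + I + 3) (by omega) (by omega) (by omega)
      (fun i hi h1 h2 h3 _ => by
        rw [filter_Bblk]
        by_cases hm : i ≤ m
        · by_cases h1i : 1 ≤ i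
          · rw [if_pos hm, if_pos h1i, filter_pair_list m i I (I + 1) a b hm hI hI1 h1 h2,
              filter_pair_list m (i - 1) I (I + 1) a b (by omega) hI hI1 (by omega) (by omega)]
            simp
          · rw [if_pos hm, if_neg h1i, filter_pair_list m i I (I + 1) a b hm hI hI1 h1 h2]
            simp
        · by_cases h1i : 1 ≤ i
          · rw [if_neg hm, if_pos h1i,
              filter_pair_list m (i - 1) I (I + 1) a b (by omega) hI hI1 (by omega) (by omega)]
            simp
          · rw [if_neg hm, if_neg h1i]
            simp),
    if_pos (by omega), if_pos (by omega), if_pos (by omega), if_neg (by omega),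
    filter_Bblk, filter_Bblk, filter_Bblk, if_pos hI, if_pos hI1,
    if_pos (show 1 ≤ I + 1 by omega), if_pos (show 1 ≤ I + 2 by omega),
    filter_pair_keep_left m I (I + 1) a b hI hI1 (by omega),
    show I + 1 - 1 = I from rfl, show I + 2 - 1 = I + 1 from rfl,
    filter_pair_keep_right m (I + 1) I a b hI1 hI (by omega),
    filter_pair_keep_left m I (I + 1) a b hI hI1 (by omega)]
  have e1 : (if 1 ≤ I then
      [vtx m (I - 1) 0, vtx m (I - 1) 1].filter
        (fun z => decide (z = vtx m I a ∨ z = vtx m (I + 1) b)) else []) = [] := by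
    by_cases h1i : 1 ≤ I
    · rw [if_pos h1i,
        filter_pair_list m (I - 1) I (I + 1) a b (by omega) hI hI1 (by omega) (by omega)]
    · rw [if_neg h1i]
  have e2 : (if I + 2 ≤ m then
      [vtx m (I + 2) 0, vtx m (I + 2) 1].filter
        (fun z => decide (z = vtx m I a ∨ z = vtx m (I + 1) b)) else []) = [] := by
    by_cases h1i : I + 2 ≤ m
    · rw [if_pos h1i,
        filter_pair_list m (I + 2) I (I + 1) a b (by omega) hI hI1 (by omega) (by omega)]
    · rw [if_neg h1i]
  rw [e1, e2]
  simp

lemma filter_wrd_far (m I J : ℕ) (hIJ : I + 2 ≤ J) (hJ : J ≤ m) (a b : Fin 2) :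
    (wrd m).filter (fun z => decide (z = vtx m I a ∨ z = vtx m J b)) =
      [vtx m I a, vtx m I a, vtx m J b, vtx m J b] := by
  have hI : I ≤ m := by omega
  rw [wrd, List.filter_flatMap,
    bind4 (m + 2) _ I (I + 1) J (J + 1) (by omega) (by omega) (by omega)
      (fun i hi h1 h2 h3 h4 => by
        rw [filter_Bblk]
        by_cases hm : i ≤ m
        · by_cases h1i : 1 ≤ i
          · rw [if_pos hm, if_pos h1i, filter_pair_list m i I J a b hm hI hJ h1 h3,
              filter_pair_list m (i - 1) I J a b (by omega) hI hJ (by omega) (by omega)]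
            simp
          · rw [if_pos hm, if_neg h1i, filter_pair_list m i I J a b hm hI hJ h1 h3]
            simp
        · by_cases h1i : 1 ≤ i
          · rw [if_neg hm, if_pos h1i,
              filter_pair_list m (i - 1) I J a b (by omega) hI hJ (by omega) (by omega)]
            simp
          · rw [if_neg hm, if_neg h1i]
            simp),
    if_pos (by omega), if_pos (by omega), if_pos (by omega), if_pos (by omega),
    filter_Bblk, filter_Bblk, filter_Bblk, filter_Bblk, if_pos hI,
    if_pos (show I + 1 ≤ m by omega), if_pos hJ,
    if_pos (show 1 ≤ I + 1 by omega), if_pos (show 1 ≤ J by omega),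
    if_pos (show 1 ≤ J + 1 by omega),
    filter_pair_keep_left m I J a b hI hJ (by omega),
    show I + 1 - 1 = I from rfl, show J + 1 - 1 = J from rfl,
    filter_pair_list m (I + 1) I J a b (by omega) hI hJ (by omega) (by omega),
    filter_pair_keep_left m I J a b hI hJ (by omega),
    filter_pair_keep_right m J I a b hJ hI (by omega),
    filter_pair_list m (J - 1) I J a b (by omega) hI hJ (by omega) (by omega)]
  have e1 : (if 1 ≤ I then
      [vtx m (I - 1) 0, vtx m (I - 1) 1].filter
        (fun z => decide (z = vtx m I a ∨ z = vtx m J b)) else []) = [] := by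
    by_cases h1i : 1 ≤ I
    · rw [if_pos h1i,
        filter_pair_list m (I - 1) I J a b (by omega) hI hJ (by omega) (by omega)]
    · rw [if_neg h1i]
  have e2 : (if J + 1 ≤ m then
      [vtx m (J + 1) 0, vtx m (J + 1) 1].filter
        (fun z => decide (z = vtx m I a ∨ z = vtx m J b)) else []) = [] := by
    by_cases h1i : J + 1 ≤ m
    · rw [if_pos h1i,
        filter_pair_list m (J + 1) I J a b (by omega) hI hJ (by omega) (by omega)]
    · rw [if_neg h1i]
  rw [e1, e2]
  simp

end PathK2Proof

namespace PathK2Proof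

lemma mem_wrd (m : ℕ) (z : Fin (m + 1) × Fin 2) : z ∈ wrd m := by
  obtain ⟨⟨i, hi⟩, a⟩ := z
  have hz : (⟨⟨i, hi⟩, a⟩ : Fin (m + 1) × Fin 2) = vtx m i a := by
    simp [vtx, Prod.ext_iff, Fin.ext_iff, Nat.min_eq_left (show i ≤ m by omega)]
  rw [hz, wrd, List.mem_flatMap]
  refine ⟨i, List.mem_range.mpr (by omega), ?_⟩
  rw [Bblk, if_pos (show i ≤ m by omega)]
  fin_cases a <;> simp

lemma alternates_symm {V : Type*} [DecidableEq V] (w : List V) (x y : V) :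
    Alternates w x y ↔ Alternates w y x := by
  unfold Alternates
  rw [List.filter_congr (fun z _ => decide_eq_decide.mpr or_comm :
    ∀ z ∈ w, (fun z => decide (z = x ∨ z = y)) z = (fun z => decide (z = y ∨ z = x)) z)]

lemma core (m : ℕ) (x y : Fin (m + 1) × Fin 2) (hxy : x ≠ y) (hle : x.1.val ≤ y.1.val) :
    (Alternates (wrd m) x y ↔ (PathK2 (m + 1)).Adj x y) := by
  obtain ⟨⟨I, hI⟩, a⟩ := x
  obtain ⟨⟨J, hJ⟩, b⟩ := y
  simp only at hle
  have hx : (⟨⟨I, hI⟩, a⟩ : Fin (m + 1) × Fin 2) = vtx m I a := by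
    simp [vtx, Prod.ext_iff, Fin.ext_iff, Nat.min_eq_left (show I ≤ m by omega)]
  have hy : (⟨⟨J, hJ⟩, b⟩ : Fin (m + 1) × Fin 2) = vtx m J b := by
    simp [vtx, Prod.ext_iff, Fin.ext_iff, Nat.min_eq_left (show J ≤ m by omega)]
  rw [hx, hy] at hxy ⊢
  have hIm : I ≤ m := by omega
  have hJm : J ≤ m := by omega
  rcases (show J = I ∨ J = I + 1 ∨ I + 2 ≤ J from by omega) with h | h | h
  · subst h
    have hab : a ≠ b := fun e => hxy (by rw [e])
    apply iff_of_true
    · unfold Alternates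
      rw [filter_wrd_same m J hJm a b hab]
      have h01 : vtx m J 0 ≠ vtx m J 1 := by simp [vtx_eq_iff hJm hJm]
      simp [List.Chain', List.isChain_cons_cons, h01, h01.symm]
    · rw [PathK2, SimpleGraph.fromRel_adj]
      exact ⟨hxy, Or.inl (Or.inl rfl)⟩
  · subst h
    have hI1 : I + 1 ≤ m := by omega
    apply iff_of_true
    · unfold Alternates
      rw [filter_wrd_adj m I hI1 a b]
      have hne : vtx m I a ≠ vtx m (I + 1) b := by
        simp [vtx_eq_iff hIm hI1]
      simp [List.Chain', List.isChain_cons_cons, hne, hne.symm]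
    · rw [PathK2, SimpleGraph.fromRel_adj]
      refine ⟨hxy, Or.inl (Or.inr (Or.inl ?_))⟩
      simp [vtx, Nat.min_eq_left hIm, Nat.min_eq_left hI1]
  · apply iff_of_false
    · unfold Alternates
      rw [filter_wrd_far m I J h hJm a b]
      intro hch
      simp [List.Chain', List.isChain_cons_cons] at hch
    · rw [PathK2, SimpleGraph.fromRel_adj]
      rintro ⟨-, h'⟩
      simp only [vtx, Fin.mk.injEq, Prod.mk.injEq, Fin.ext_iff] at h'
      omega

end PathK2Proof



/-- The graph obtained from a path by replacing each vertex by the module `K₂` is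
word-representable. -/
theorem pathK2_wordRepresentable (n : ℕ) (hn : 1 ≤ n) :
    WordRepresentable (PathK2 n) := by
  obtain ⟨m, rfl⟩ : ∃ m, n = m + 1 := ⟨n - 1, by omega⟩
  refine ⟨PathK2Proof.wrd m, PathK2Proof.mem_wrd m, fun x y hxy => ?_⟩
  rcases le_total x.1.val y.1.val with h | h
  · exact PathK2Proof.core m x y hxy h
  · rw [PathK2Proof.alternates_symm, SimpleGraph.adj_comm]
    exact PathK2Proof.core m y x (Ne.symm hxy) h
end
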